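/- arXiv:2111.01000 — 3 statements merged into one kernel-verified Lean document; each statement's English description precedes it below -/
import Mathlib

section
/- Let M be a locally small category, A a small full subcategory of M, and i* : M ⥤ Psh(A) the restricted Yoneda functor. The following four conditions are equivalent: (i) for every object X of M, the sieve on X generated by all morphisms with target X and source in A is effectively epimorphic; (ii) for every object X of M, that sieve is universally effectively epimorphic, i.e., its pullback along any morphism X' → X of M is again an effectively epimorphic sieve on X'; (iii) for every object X of M, the canonical cocone exhibits X as the colimit in M of the forgetful functor A_{/X} → M, where A_{/X} is the comma category whose objects are pairs (a, u) with a an object of A and u : a → X a morphism of M; (iv) the functor i* is fully faithful. -/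
/-!
STATEMENT 0: For a locally small category `M`, a small full subcategory `A` (given by a
fully faithful functor `ι : A ⥤ M`), and the restricted Yoneda functor
`i* : M ⥤ Psh(A)`, the following are equivalent:
(i) for every `X`, the sieve generated by all morphisms with target `X` and source in `A`
    (i.e. the sieve of morphisms factoring through the image of `ι`) is effectively epimorphic;
(ii) for every `X`, that sieve is universally effectively epimorphic;
(iii) for every `X`, the canonical cocone exhibits `X` as the colimit of the forgetful
      functor `A_{/X} ⥤ M`;
(iv) `i*` is fully faithful.
-/

open CategoryTheory CategoryTheory.Limits

universe v u

namespace Stmt0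

open Opposite

variable {A : Type v} [SmallCategory A] {M : Type u} [Category.{v} M]

/-- The canonical cocone on the forgetful functor `A_{/X} ⥤ M`, with apex `X`. -/
@[simps]
def canonicalCocone (ι : A ⥤ M) (X : M) :
    Cocone (CostructuredArrow.proj ι X ⋙ ι) where
  pt := X
  ι :=
    { app := fun f => f.hom
      naturality := fun f f' g => by
        have := CostructuredArrow.w g
        dsimp at this ⊢
        exact this.trans (Category.comp_id _).symm }

/-- The restricted Yoneda functor `i*`. -/
abbrev Presheaf.restrictedYoneda (ι : A ⥤ M) : M ⥤ Aᵒᵖ ⥤ Type v :=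
  yoneda ⋙ (Functor.whiskeringLeft _ _ _).obj ι.op

section Aux

variable (ι : A ⥤ M)

lemma nat_helper {X Y : M}
    (η : (Presheaf.restrictedYoneda ι).obj X ⟶ (Presheaf.restrictedYoneda ι).obj Y)
    {a a' : A} (φ : a' ⟶ a) (u : ι.obj a ⟶ X) :
    η.app (op a') (ι.map φ ≫ u) = ι.map φ ≫ η.app (op a) u := by
  have := types_congr_hom (η.naturality φ.op) u
  dsimp [Presheaf.restrictedYoneda] at this ⊢
  exact this

/-- (iv) → (iii) -/
noncomputable def isColimitOfFullyFaithful
    [(Presheaf.restrictedYoneda ι).Full] [(Presheaf.restrictedYoneda ι).Faithful] (X : M) :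
    IsColimit (canonicalCocone ι X) where
  desc s := (Presheaf.restrictedYoneda ι).preimage
    { app := fun a => TypeCat.ofHom fun u => s.ι.app (CostructuredArrow.mk u)
      naturality := fun a a' φ => by
        ext u
        have := s.w (CostructuredArrow.homMk φ.unop
          (by rfl) : CostructuredArrow.mk (ι.map φ.unop ≫ u) ⟶ CostructuredArrow.mk u)
        dsimp [Presheaf.restrictedYoneda] at this ⊢
        exact this.symm }
  fac s j := by
    obtain ⟨a, ⟨⟨⟩⟩, u⟩ := j
    have := types_congr_hom (congr_app ((Presheaf.restrictedYoneda ι).map_preimage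
      { app := fun a => TypeCat.ofHom fun (u : ι.obj a.unop ⟶ X) => s.ι.app (CostructuredArrow.mk u)
        naturality := fun a a' φ => by
          ext u
          have := s.w (CostructuredArrow.homMk φ.unop
            (by rfl) : CostructuredArrow.mk (ι.map φ.unop ≫ u) ⟶ CostructuredArrow.mk u)
          dsimp [Presheaf.restrictedYoneda] at this ⊢
          exact this.symm }) (op a)) u
    dsimp [Presheaf.restrictedYoneda] at this ⊢
    exact this
  uniq s m hm := by
    apply (Presheaf.restrictedYoneda ι).map_injective
    rw [(Presheaf.restrictedYoneda ι).map_preimage]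
    ext a u
    have := hm (CostructuredArrow.mk u)
    dsimp [Presheaf.restrictedYoneda] at this ⊢
    exact this

/-- (iii) → (iv), fullness part. -/
lemma full_of_isColimit (h : ∀ X : M, Nonempty (IsColimit (canonicalCocone ι X))) :
    (Presheaf.restrictedYoneda ι).Full := by
  constructor
  intro X Y η
  let s : Cocone (CostructuredArrow.proj ι X ⋙ ι) :=
    { pt := Y
      ι :=
        { app := fun j => η.app (op j.left) j.hom
          naturality := fun j j' g => by
            have w := CostructuredArrow.w g
            dsimp at w ⊢
            have := nat_helper ι η g.left j'.hom
            rw [w] at this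
            exact this.symm.trans (Category.comp_id _).symm }}
  refine ⟨(h X).some.desc s, ?_⟩
  ext a u
  have := (h X).some.fac s (CostructuredArrow.mk u)
  dsimp [Presheaf.restrictedYoneda] at this ⊢
  exact this

/-- (iii) → (iv), faithfulness part. -/
lemma faithful_of_isColimit (h : ∀ X : M, Nonempty (IsColimit (canonicalCocone ι X))) :
    (Presheaf.restrictedYoneda ι).Faithful := by
  constructor
  intro X Y f g hfg
  refine (h X).some.hom_ext fun j => ?_
  have := types_congr_hom (congr_app hfg (op j.left)) j.hom
  dsimp [Presheaf.restrictedYoneda] at this ⊢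
  exact this

/-- From (i): morphisms out of any object are determined by composition with morphisms
from the image of `ι`. -/
lemma hom_ext_of_effectiveEpimorphic
    (h : ∀ X : M, (Sieve.coverByImage ι X).EffectiveEpimorphic)
    {T Y : M} {f g : T ⟶ Y} (hfg : ∀ (a : A) (k : ι.obj a ⟶ T), k ≫ f = k ≫ g) :
    f = g := by
  refine (h T).some.hom_ext fun j => ?_
  obtain ⟨⟨a, l, m, fac⟩⟩ := j.2
  have : j.1.hom = l ≫ m := fac.symm
  change j.1.hom ≫ f = j.1.hom ≫ g
  rw [this, Category.assoc, Category.assoc, hfg a m]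

/-- (i) → (iv), faithfulness part. -/
lemma faithful_of_effectiveEpimorphic
    (h : ∀ X : M, (Sieve.coverByImage ι X).EffectiveEpimorphic) :
    (Presheaf.restrictedYoneda ι).Faithful := by
  constructor
  intro X Y f g hfg
  refine hom_ext_of_effectiveEpimorphic ι h fun a k => ?_
  exact types_congr_hom (congr_app hfg (op a)) k

variable [ι.Full] [ι.Faithful]

lemma nat_helper' {X Y : M}
    (η : (Presheaf.restrictedYoneda ι).obj X ⟶ (Presheaf.restrictedYoneda ι).obj Y)
    {a a' : A} (k : ι.obj a' ⟶ ι.obj a) (u : ι.obj a ⟶ X) :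
    η.app (op a') (k ≫ u) = k ≫ η.app (op a) u := by
  obtain ⟨φ, rfl⟩ := ι.map_surjective k
  exact nat_helper ι η φ u

lemma compat (h : ∀ X : M, (Sieve.coverByImage ι X).EffectiveEpimorphic)
    {X Y : M} (η : (Presheaf.restrictedYoneda ι).obj X ⟶ (Presheaf.restrictedYoneda ι).obj Y)
    {T : M} {a₁ a₂ : A} (h₁ : T ⟶ ι.obj a₁) (h₂ : T ⟶ ι.obj a₂)
    (u₁ : ι.obj a₁ ⟶ X) (u₂ : ι.obj a₂ ⟶ X) (e : h₁ ≫ u₁ = h₂ ≫ u₂) :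
    h₁ ≫ η.app (op a₁) u₁ = h₂ ≫ η.app (op a₂) u₂ := by
  refine hom_ext_of_effectiveEpimorphic ι h fun b k => ?_
  rw [← Category.assoc, ← Category.assoc, ← nat_helper' ι η (k ≫ h₁) u₁,
    ← nat_helper' ι η (k ≫ h₂) u₂, Category.assoc, Category.assoc, e]

/-- (i) → (iv), fullness part. -/
lemma full_of_effectiveEpimorphic
    (h : ∀ X : M, (Sieve.coverByImage ι X).EffectiveEpimorphic) :
    (Presheaf.restrictedYoneda ι).Full := by
  constructor
  intro X Y η
  let s : Cocone ((Sieve.coverByImage ι X).arrows.diagram) :=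
    { pt := Y
      ι :=
        { app := fun j => j.2.some.lift ≫ η.app (op j.2.some.obj) j.2.some.map
          naturality := fun j j' g => by
            dsimp
            rw [Category.comp_id, ← Category.assoc]
            refine compat ι h η _ _ _ _ ?_
            rw [Category.assoc, j'.2.some.fac, j.2.some.fac]
            exact Over.w g.hom } }
  refine ⟨(h X).some.desc s, ?_⟩
  ext a u
  have hj : (Sieve.coverByImage ι X).arrows u := Presieve.in_coverByImage ι u
  have := (h X).some.fac s ⟨Over.mk u, hj⟩
  dsimp [Presheaf.restrictedYoneda] at this ⊢
  refine this.trans ?_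
  change hj.some.lift ≫ η.app (op hj.some.obj) hj.some.map = _
  have := compat ι h η hj.some.lift (𝟙 (ι.obj a.unop)) hj.some.map u
    (by simp [hj.some.fac])
  rw [this]
  simp

/-- (iv) → (ii) -/
lemma pullback_effectiveEpimorphic_of_fullyFaithful
    [(Presheaf.restrictedYoneda ι).Full] [(Presheaf.restrictedYoneda ι).Faithful]
    (X X' : M) (f : X' ⟶ X) :
    ((Sieve.coverByImage ι X).pullback f).EffectiveEpimorphic := by
  set S' : Sieve X' := (Sieve.coverByImage ι X).pullback f with hS'
  have mem : ∀ {a : A} (u : ι.obj a ⟶ X'), S'.arrows u :=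
    fun {a} u => ⟨⟨a, 𝟙 _, u ≫ f, by simp⟩⟩
  -- the natural transformation associated to a cocone
  let θ : ∀ (s : Cocone S'.arrows.diagram),
      (Presheaf.restrictedYoneda ι).obj X' ⟶ (Presheaf.restrictedYoneda ι).obj s.pt :=
    fun s =>
    { app := fun a => TypeCat.ofHom fun (u : ι.obj a.unop ⟶ X') => s.ι.app ⟨Over.mk u, mem u⟩
      naturality := fun a a' φ => by
        ext u
        have := s.w (show (⟨Over.mk (ι.map φ.unop ≫ u), mem _⟩ : S'.arrows.category) ⟶
            ⟨Over.mk u, mem u⟩ from ⟨Over.homMk (ι.map φ.unop)⟩)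
        dsimp [Presheaf.restrictedYoneda] at this ⊢
        exact this.symm }
  constructor
  refine
    { desc := fun s => (Presheaf.restrictedYoneda ι).preimage (θ s)
      fac := fun s j => ?_
      uniq := fun s m hm => ?_ }
  · apply (Presheaf.restrictedYoneda ι).map_injective
    ext a g
    have h1 := types_congr_hom (congr_app ((Presheaf.restrictedYoneda ι).map_preimage (θ s))
      (op a.unop)) (g ≫ j.1.hom)
    have h2 := s.w (show (⟨Over.mk (g ≫ j.1.hom), S'.downward_closed j.2 g⟩ :
        S'.arrows.category) ⟶ j from ⟨Over.homMk g⟩)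
    dsimp [Presheaf.restrictedYoneda] at h1 h2 ⊢
    exact ((Category.assoc _ _ _).symm.trans h1).trans h2.symm
  · apply (Presheaf.restrictedYoneda ι).map_injective
    refine Eq.trans ?_ ((Presheaf.restrictedYoneda ι).map_preimage (θ s)).symm
    ext a u
    have := hm ⟨Over.mk u, mem u⟩
    dsimp [Presheaf.restrictedYoneda] at this ⊢
    exact this

end Aux

theorem strictly_generating_tfae (ι : A ⥤ M) [ι.Full] [ι.Faithful] :
    [ ∀ X : M, (Sieve.coverByImage ι X).EffectiveEpimorphic,
      ∀ (X X' : M) (f : X' ⟶ X), ((Sieve.coverByImage ι X).pullback f).EffectiveEpimorphic,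
      ∀ X : M, Nonempty (IsColimit (canonicalCocone ι X)),
      (yoneda ⋙ (Functor.whiskeringLeft _ _ _).obj ι.op).Full ∧
        (yoneda ⋙ (Functor.whiskeringLeft _ _ _).obj ι.op).Faithful ].TFAE := by
  tfae_have 1 → 4
  | h => ⟨full_of_effectiveEpimorphic ι h, faithful_of_effectiveEpimorphic ι h⟩
  tfae_have 4 → 2
  | ⟨hF, hf⟩ => fun X X' f => pullback_effectiveEpimorphic_of_fullyFaithful ι X X' f
  tfae_have 2 → 1
  | h => fun X => by simpa using h X X (𝟙 X)
  tfae_have 4 → 3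
  | ⟨hF, hf⟩ => fun X => ⟨isColimitOfFullyFaithful ι X⟩
  tfae_have 3 → 4
  | h => ⟨full_of_isColimit ι h, faithful_of_isColimit ι h⟩
  tfae_finish

end Stmt0
end

section
/- Let A be a small category such that for every object a of A there exists a morphism e → yoneda(a) in Psh(A) from the terminal presheaf e (i.e., every object of A has a section over the final object). Then for every abelian presheaf F on A and every n ≥ 1, the n-th right derived functor of lim : Psh_Ab(A) ⥤ Ab vanishes at F: Rⁿlim(F) = 0. -/
/-!
STATEMENT 17: Let `A` be a small category such that every object of `A` has a section
over the final object, i.e. for every object `a` there exists a morphism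
`e ⟶ yoneda.obj a` in `Psh(A)` from the terminal presheaf `e`.  Then for every abelian
presheaf `F` on `A` and every `n ≥ 1`, the `n`-th right derived functor of
`lim : Psh_Ab(A) ⥤ Ab` vanishes at `F`: `Rⁿlim(F) = 0`.

(As granted by the context, `Psh_Ab(A)` has enough injectives, so that the right derived
functors exist; this is recorded by the instance hypothesis
`[EnoughInjectives (Aᵒᵖ ⥤ AddCommGrpCat.{v})]`.)
-/

open CategoryTheory CategoryTheory.Limits

universe v

namespace Stmt17

variable (A : Type v) [SmallCategory A]

/-- The limit functor `lim : Psh_Ab(A) ⥤ Ab`, `F ↦ lim_{Aᵒᵖ} F`. -/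
noncomputable abbrev limFunctor : (Aᵒᵖ ⥤ AddCommGrpCat.{v}) ⥤ AddCommGrpCat.{v} :=
  lim

instance : (limFunctor A).Additive where
  map_add {F G f g} := by
    apply limit.hom_ext
    intro j
    simp

open Opposite

lemma subsingleton_of_isTerminal {T : Type v} (h : IsTerminal T) : Subsingleton T :=
  ⟨fun x y =>
    by
      have := congrArg (fun f : PUnit.{v + 1} ⟶ T => f PUnit.unit)
        (h.hom_ext (TypeCat.ofHom fun _ : PUnit.{v + 1} => x) (TypeCat.ofHom fun _ : PUnit.{v + 1} => y))
      simpa using this⟩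

section Sections

variable {A}
variable {a : A} (s : (⊤_ (Aᵒᵖ ⥤ Type v)) ⟶ yoneda.obj a)

/-- From a section `e ⟶ yoneda a` of the terminal presheaf, a natural family of maps
`b ⟶ a`. -/
noncomputable def secMap (b : A) : b ⟶ a :=
  (terminal.from (yoneda.obj b) ≫ s).app (op b) (𝟙 b)

lemma secMap_natural {b b' : A} (f : b' ⟶ b) : f ≫ secMap s b = secMap s b' := by
  have hsub : Subsingleton ((⊤_ (Aᵒᵖ ⥤ Type v)).obj (op b')) :=
    subsingleton_of_isTerminal (isLimitOfHasTerminalOfPreservesLimit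
      ((evaluation Aᵒᵖ (Type v)).obj (op b')))
  have hnat := congrArg (fun g => g (𝟙 b)) ((terminal.from (yoneda.obj b) ≫ s).naturality f.op)
  have hval : ((yoneda.obj b).map f.op) (𝟙 b) = f := by simp
  have h1 : f ≫ secMap s b = (terminal.from (yoneda.obj b) ≫ s).app (op b') f := by
    simpa [secMap, hval] using hnat.symm
  have h2 : (terminal.from (yoneda.obj b) ≫ s).app (op b') f =
      (terminal.from (yoneda.obj b') ≫ s).app (op b') (𝟙 b') := by
    simp only [NatTrans.comp_app, types_comp_apply]
    exact congrArg (s.app (op b')) (@Subsingleton.elim _ hsub _ _)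
  rw [h1, h2]
  rfl

end Sections

lemma preservesEpi (h : ∀ a : A, Nonempty ((⊤_ (Aᵒᵖ ⥤ Type v)) ⟶ yoneda.obj a)) :
    (limFunctor A).PreservesEpimorphisms := by
  constructor
  intro F G φ hφ
  rw [AddCommGrpCat.epi_iff_surjective]
  have hmap : (limFunctor A).map φ = limMap φ := lim_map φ
  rw [hmap]
  rcases isEmpty_or_nonempty A with hA | hA
  · -- the index category is empty: the target is a subsingleton
    intro y
    exact ⟨0, Concrete.limit_ext G _ _ (fun j => (hA.false j.unop).elim)⟩
  · obtain ⟨a⟩ := hA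
    obtain ⟨s⟩ := h a
    intro y
    -- lift the component at `a`
    have hepi : Epi (φ.app (op a)) := inferInstance
    obtain ⟨x₀, hx₀⟩ := (AddCommGrpCat.epi_iff_surjective _).1 hepi (limit.π G (op a) y)
    -- build a compatible family of elements of `F`
    let fam : ∀ j : Aᵒᵖ, (F ⋙ forget AddCommGrpCat).obj j := fun j => F.map (secMap s j.unop).op x₀
    have hfam : fam ∈ Functor.sections (F ⋙ forget AddCommGrpCat) := by
      intro j j' g
      have : (secMap s j.unop).op ≫ g = (secMap s j'.unop).op := by
        rw [← secMap_natural s g.unop]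
        rfl
      show (F.map g) (F.map (secMap s j.unop).op x₀) = F.map (secMap s j'.unop).op x₀
      rw [← comp_apply, ← F.map_comp, this]
    -- the corresponding element of the limit
    let e := preservesLimitIso (forget AddCommGrpCat) F
    let x : (limit F : AddCommGrpCat.{v}) :=
      e.inv ((Types.limitEquivSections (F ⋙ forget AddCommGrpCat)).symm ⟨fam, hfam⟩)
    have hx : ∀ j : Aᵒᵖ, limit.π F j x = fam j := by
      intro j
      have h1 : (forget AddCommGrpCat).map (limit.π F j) x =
          limit.π (F ⋙ forget AddCommGrpCat) j (e.hom x) := by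
        rw [← preservesLimitIso_hom_π (forget AddCommGrpCat) F j]
        rfl
      have h2 : e.hom x = (Types.limitEquivSections (F ⋙ forget AddCommGrpCat)).symm ⟨fam, hfam⟩ := by
        show e.hom (e.inv _) = _
        rw [← types_comp_apply e.inv e.hom, e.inv_hom_id]
        rfl
      have h3 := Types.limitEquivSections_symm_apply (F ⋙ forget AddCommGrpCat) ⟨fam, hfam⟩ j
      show (forget AddCommGrpCat).map (limit.π F j) x = fam j
      rw [h1, h2, h3]
    refine ⟨x, ?_⟩
    refine Concrete.limit_ext G _ _ fun j => ?_
    have hπ : limit.π G j (limMap φ x) = φ.app j (limit.π F j x) := by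
      show (limMap φ ≫ limit.π G j) x = _
      rw [limMap_π, comp_apply]
    refine hπ.trans ?_
    rw [hx j]
    show (φ.app j) ((F.map (secMap s j.unop).op) x₀) = _
    rw [← comp_apply, φ.naturality, comp_apply, hx₀, ← comp_apply, limit.w G (secMap s j.unop).op]

theorem isZero_rightDerived_lim [EnoughInjectives (Aᵒᵖ ⥤ AddCommGrpCat.{v})]
    (h : ∀ a : A, Nonempty ((⊤_ (Aᵒᵖ ⥤ Type v)) ⟶ yoneda.obj a))
    (F : Aᵒᵖ ⥤ AddCommGrpCat.{v}) (n : ℕ) (hn : 1 ≤ n) :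
    IsZero (((limFunctor A).rightDerived n).obj F) := by
  haveI := preservesEpi A h
  haveI : (limFunctor A).PreservesHomology :=
    Functor.preservesHomology_of_preservesEpis_and_kernels _
  obtain ⟨m, rfl⟩ : ∃ m, n = m + 1 := ⟨n - 1, (Nat.succ_pred_eq_of_pos hn).symm⟩
  obtain ⟨I⟩ : Nonempty (InjectiveResolution F) := HasInjectiveResolution.out
  refine IsZero.of_iso ?_ (I.isoRightDerivedObj (limFunctor A) (m + 1))
  erw [← HomologicalComplex.exactAt_iff_isZero_homology]
  rw [HomologicalComplex.exactAt_iff' _ m (m + 1) (m + 2) (by simp)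
    (by simp only [CochainComplex.next]; rfl)]
  exact (I.exact_succ m).map (limFunctor A)

end Stmt17
end

section
/- Let A be a small category and N an abelian category with all small colimits and enough projectives. Then the functor category Aᵒᵖ ⥤ N, which is abelian with kernels and cokernels computed pointwise, has enough projectives: every object of Aᵒᵖ ⥤ N is the target of an epimorphism from a projective object. -/
/-!
STATEMENT 18: Let `A` be a small category and `N` an abelian category with all small
colimits and enough projectives.  Then the (abelian) category of `N`-valued presheaves
`Aᵒᵖ ⥤ N` has enough projectives.
-/

open CategoryTheory CategoryTheory.Limits

universe v u

theorem enoughProjectives_functorCategory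
    (A : Type v) [SmallCategory A] (N : Type u) [Category.{v} N]
    [Abelian N] [HasColimitsOfSize.{v, v} N] [EnoughProjectives N] :
    EnoughProjectives (Aᵒᵖ ⥤ N) := by
  constructor
  intro M
  -- evaluation at each object preserves epimorphisms
  have hev : ∀ a : Aᵒᵖ, ((evaluation Aᵒᵖ N).obj a).PreservesEpimorphisms := by
    intro a
    constructor
    intro F G f hf
    rw [NatTrans.epi_iff_epi_app] at hf
    exact hf a
  -- the summands: left adjoints applied to projective covers
  let S : Aᵒᵖ → (Aᵒᵖ ⥤ N) := fun a =>
    (evaluationLeftAdjoint N a).obj (Projective.over (M.obj a))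
  have hS : ∀ a, Projective (S a) := fun a => by
    have := hev a
    exact (evaluationAdjunctionRight N a).map_projective _ (Projective.projective_over _)
  haveI : ∀ a, Projective (S a) := hS
  -- the comparison morphisms
  let g : ∀ a : Aᵒᵖ, S a ⟶ M := fun a =>
    { app := fun b => Sigma.desc fun h => Projective.π (M.obj a) ≫ M.map h
      naturality := by
        intros
        dsimp [S]
        apply Sigma.hom_ext
        intro
        erw [Sigma.ι_desc_assoc, Sigma.ι_desc, Sigma.ι_desc_assoc]
        simp }
  let f : (∐ S) ⟶ M := Sigma.desc g
  have hf : Epi f := by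
    rw [NatTrans.epi_iff_epi_app]
    intro b
    have key : Sigma.ι (fun _ : b ⟶ b => Projective.over (M.obj b)) (𝟙 b) ≫
        ((Sigma.ι S b).app b ≫ f.app b) = Projective.π (M.obj b) := by
      have h1 : Sigma.ι S b ≫ f = g b := Sigma.ι_desc _ _
      have h2 : (Sigma.ι S b).app b ≫ f.app b = (g b).app b := by
        rw [← NatTrans.comp_app, h1]
      erw [h2]
      simp [g]
    haveI : Epi ((Sigma.ι (fun _ : b ⟶ b => Projective.over (M.obj b)) (𝟙 b) ≫
        (Sigma.ι S b).app b) ≫ f.app b) := by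
      erw [Category.assoc, key]; infer_instance
    exact epi_of_epi (Sigma.ι (fun _ : b ⟶ b => Projective.over (M.obj b)) (𝟙 b) ≫
        (Sigma.ι S b).app b) (f.app b)
  haveI := hf
  exact ⟨ProjectivePresentation.mk (∐ S) f⟩
end
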